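/- Let G be a finite abelian group, H ≤ G a subgroup of index k with |H|-subsets T_1,...,T_k ⊆ H sharing a common spectrum L ⊆ Ĥ of size n, and let (Q,S) be a spectral pair in G/H with |Q| = k. Choose representatives q_1,...,q_k ∈ G of the cosets corresponding to Q. Then Γ := ⋃_{m=1}^k (q_m + T_m) is spectral in G; specifically, choosing extensions λ̃_j ∈ Ĝ of λ_j ∈ L and lifts s̃_i ∈ Ĝ of s_i ∈ S, the set Σ := {s̃_i · λ̃_j : 1 ≤ i ≤ k, 1 ≤ j ≤ n} is a spectrum of Γ. -/
import Mathlib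


open Complex

/-- Tiling-type construction of spectral sets (Proposition 2.2 of [nspec]):
if `T_1,…,T_k ⊆ H` share a common spectrum `L ⊆ Ĥ`, `(Q,S)` is a spectral pair
in `G/H` with `|Q| = k`, `q_m` are representatives of the cosets in `Q`, then
`Σ = {s̃_i·λ̃_j}` is a spectrum of `Γ = ⋃_m (q_m + T_m)`, i.e. the characters
`s̃_i λ̃_j` are pairwise orthogonal on `Γ`. -/
theorem tiling_spectral_construction
    (G : Type*) [AddCommGroup G] [Fintype G] (H : AddSubgroup G)
    (k n : ℕ) (hk : Nat.card (G ⧸ H) = k)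
    -- the sets T_m ⊆ H, each with n elements
    (T : Fin k → Fin n → H) (hTinj : ∀ m, Function.Injective (T m))
    -- the common spectrum L of the T_m in Ĥ
    (L : Fin n → AddChar H ℂ)
    (hL : ∀ m, ∀ j j' : Fin n,
      ∑ r : Fin n, L j (T m r) * (starRingEnd ℂ) (L j' (T m r))
        = if j = j' then (n : ℂ) else 0)
    -- representatives q_m of the k distinct cosets forming Q
    (q : Fin k → G) (hq : Function.Injective fun m => (QuotientAddGroup.mk (q m) : G ⧸ H))
    -- the spectrum S of Q in the dual of G/H
    (s : Fin k → AddChar (G ⧸ H) ℂ)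
    (hS : ∀ i i' : Fin k,
      ∑ m : Fin k, s i (QuotientAddGroup.mk (q m)) *
          (starRingEnd ℂ) (s i' (QuotientAddGroup.mk (q m)))
        = if i = i' then (k : ℂ) else 0)
    -- extensions λ̃_j of λ_j to Ĝ
    (lt : Fin n → AddChar G ℂ) (hext : ∀ (j : Fin n) (h : H), lt j (h : G) = L j h)
    -- lifts s̃_i of s_i, constant on cosets of H
    (st : Fin k → AddChar G ℂ) (hlift : ∀ (i : Fin k) (g : G),
      st i g = s i (QuotientAddGroup.mk g)) :
    -- Σ is a spectrum of Γ: the characters s̃_i λ̃_j are pairwise orthogonal on Γ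
    ∀ (i i' : Fin k) (j j' : Fin n), (i, j) ≠ (i', j') →
      ∑ m : Fin k, ∑ r : Fin n,
        (st i * lt j) (q m + (T m r : G)) *
          (starRingEnd ℂ) ((st i' * lt j') (q m + (T m r : G))) = 0 := by
  intro i i' j j' hne
  have hmk : ∀ (m : Fin k) (r : Fin n),
      (QuotientAddGroup.mk (q m + (T m r : G)) : G ⧸ H) = QuotientAddGroup.mk (q m) := by
    intro m r
    have : ((QuotientAddGroup.mk (T m r : G)) : G ⧸ H) = 0 :=
      (QuotientAddGroup.eq_zero_iff _).mpr (T m r).2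
    rw [QuotientAddGroup.mk_add, this, add_zero]
  have hunit : ∀ (ψ : AddChar G ℂ) (g : G), ψ g * (starRingEnd ℂ) (ψ g) = 1 := by
    intro ψ g
    rw [← AddChar.map_neg_eq_conj, ← AddChar.map_add_eq_mul, add_neg_cancel,
      AddChar.map_zero_eq_one]
  have hterm : ∀ (m : Fin k) (r : Fin n),
      (st i * lt j) (q m + (T m r : G)) *
          (starRingEnd ℂ) ((st i' * lt j') (q m + (T m r : G)))
      = (s i (QuotientAddGroup.mk (q m)) *
          (starRingEnd ℂ) (s i' (QuotientAddGroup.mk (q m))) *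
          (lt j (q m) * (starRingEnd ℂ) (lt j' (q m)))) *
          (L j (T m r) * (starRingEnd ℂ) (L j' (T m r))) := by
    intro m r
    have hz : ((QuotientAddGroup.mk (T m r : G)) : G ⧸ H) = 0 :=
      (QuotientAddGroup.eq_zero_iff _).mpr (T m r).2
    simp only [AddChar.mul_apply, AddChar.map_add_eq_mul, hlift, hmk, hext, map_mul, hz,
      AddChar.map_zero_eq_one, map_one]
    ring
  have hsum : ∑ m : Fin k, ∑ r : Fin n,
        (st i * lt j) (q m + (T m r : G)) *
          (starRingEnd ℂ) ((st i' * lt j') (q m + (T m r : G)))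
      = ∑ m : Fin k, (s i (QuotientAddGroup.mk (q m)) *
          (starRingEnd ℂ) (s i' (QuotientAddGroup.mk (q m))) *
          (lt j (q m) * (starRingEnd ℂ) (lt j' (q m)))) *
          (if j = j' then (n : ℂ) else 0) := by
    refine Finset.sum_congr rfl fun m _ => ?_
    rw [← hL m j j', Finset.mul_sum]
    exact Finset.sum_congr rfl fun r _ => hterm m r
  rw [hsum]
  by_cases hj : j = j'
  · subst hj
    have hi : i ≠ i' := fun h => hne (by rw [h])
    simp only [if_pos rfl, hunit (lt j), mul_one]
    rw [← Finset.sum_mul, hS i i', if_neg hi, zero_mul]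
  · simp [hj]
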